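/- Let G be a connected graph and d ≥ 2. A set S ⊆ V(G) is a general d-position set if and only if: (i) the subgraph induced by S is a disjoint union of complete graphs Q_1,…,Q_ℓ; (ii) whenever Q_i and Q_j (i ≠ j) are not parallel, d_G(Q_i,Q_j) ≥ d; and (iii) whenever d_G(Q_i,Q_j) + d_G(Q_j,Q_k) = d_G(Q_i,Q_k) for distinct i,j,k, one has d_G(Q_i,Q_k) > d. -/
import Mathlib


/-- `S` is a general `d`-position set of `G`: no three distinct vertices of `S`
lie on a common geodesic of length at most `d`. -/
def IsGenDPos {V : Type*} (G : SimpleGraph V) (d : ℕ) (S : Set V) : Prop :=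
  ∀ ⦃u v w : V⦄, u ∈ S → v ∈ S → w ∈ S → u ≠ v → u ≠ w → v ≠ w →
    G.dist u v + G.dist v w = G.dist u w → G.dist u w ≤ d → False

/-- The general `d`-position number of `G`. -/
noncomputable def gpNum {V : Type*} (G : SimpleGraph V) (d : ℕ) : ℕ :=
  sSup {n | ∃ S : Set V, IsGenDPos G d S ∧ S.ncard = n}

/-- Distance between two sets of vertices. -/
noncomputable def setDist {V : Type*} (G : SimpleGraph V) (A B : Set V) : ℕ :=
  sInf {n | ∃ a ∈ A, ∃ b ∈ B, G.dist a b = n}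

/-- Two vertex sets are parallel if all pairs realize the set distance. -/
def Parallel {V : Type*} (G : SimpleGraph V) (A B : Set V) : Prop :=
  ∀ a ∈ A, ∀ b ∈ B, G.dist a b = setDist G A B

lemma setDist_exists {V : Type*} (G : SimpleGraph V) {A B : Set V}
    (hA : A.Nonempty) (hB : B.Nonempty) :
    ∃ a ∈ A, ∃ b ∈ B, G.dist a b = setDist G A B := by
  have hne : {n | ∃ a ∈ A, ∃ b ∈ B, G.dist a b = n}.Nonempty :=
    ⟨_, hA.choose, hA.choose_spec, hB.choose, hB.choose_spec, rfl⟩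
  exact Nat.sInf_mem hne

lemma setDist_le {V : Type*} (G : SimpleGraph V) {A B : Set V} {a b : V}
    (ha : a ∈ A) (hb : b ∈ B) : setDist G A B ≤ G.dist a b :=
  Nat.sInf_le ⟨a, ha, b, hb, rfl⟩

/-- Characterization of general d-position sets: S is a general d-position set iff
the subgraph induced by S is a disjoint union of cliques Q_1,…,Q_ℓ (its components)
satisfying conditions (ii) and (iii). -/
theorem stmt_8 {V : Type*} [Finite V] (G : SimpleGraph V) (hG : G.Connected) (d : ℕ) (hd : 2 ≤ d)
    (S : Set V) :
    IsGenDPos G d S ↔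
      ∃ (ℓ : ℕ) (Q : Fin ℓ → Set V),
        (∀ i, (Q i).Nonempty) ∧
        (∀ i j, i ≠ j → Disjoint (Q i) (Q j)) ∧
        (⋃ i, Q i) = S ∧
        (∀ i, G.IsClique (Q i)) ∧
        (∀ i j, i ≠ j → ∀ a ∈ Q i, ∀ b ∈ Q j, ¬ G.Adj a b) ∧
        (∀ i j, i ≠ j → ¬ Parallel G (Q i) (Q j) → d ≤ setDist G (Q i) (Q j)) ∧
        (∀ i j k, i ≠ j → i ≠ k → j ≠ k →
          setDist G (Q i) (Q j) + setDist G (Q j) (Q k) = setDist G (Q i) (Q k) →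
          d < setDist G (Q i) (Q k)) := by
  constructor
  · intro hS
    classical
    -- transitivity of adjacency inside S
    have key : ∀ u v w : V, u ∈ S → v ∈ S → w ∈ S → G.Adj u v → G.Adj v w → u ≠ w →
        G.Adj u w := by
      intro u v w hu hv hw huv hvw hne
      by_contra hadj
      have h1 : G.dist u v = 1 := SimpleGraph.dist_eq_one_iff_adj.2 huv
      have h2 : G.dist v w = 1 := SimpleGraph.dist_eq_one_iff_adj.2 hvw
      have htri := hG.dist_triangle (u := u) (v := v) (w := w)
      have hpos : 0 < G.dist u w := hG.pos_dist_of_ne hne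
      have hne1 : G.dist u w ≠ 1 := fun h => hadj (SimpleGraph.dist_eq_one_iff_adj.1 h)
      exact hS hu hv hw huv.ne hne hvw.ne (by omega) (by omega)
    let r : S → S → Prop := fun a b => (a : V) = b ∨ G.Adj a b
    have req : Equivalence r := by
      constructor
      · intro a; exact Or.inl rfl
      · intro a b h
        rcases h with h | h
        · exact Or.inl h.symm
        · exact Or.inr h.symm
      · intro a b c hab hbc
        rcases hab with hab | hab
        · rcases hbc with hbc | hbc
          · exact Or.inl (hab.trans hbc)
          · rw [show a = b from Subtype.ext hab]; exact Or.inr hbc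
        · rcases hbc with hbc | hbc
          · exact Or.inr (hbc ▸ hab)
          · by_cases hac : (a : V) = c
            · exact Or.inl hac
            · exact Or.inr (key a b c a.2 b.2 c.2 hab hbc hac)
    let st : Setoid S := ⟨r, req⟩
    haveI : Fintype (Quotient st) := Fintype.ofFinite _
    set ℓ := Fintype.card (Quotient st) with hℓ
    let e : Quotient st ≃ Fin ℓ := Fintype.equivFin (Quotient st)
    set Q : Fin ℓ → Set V := fun i => {v | ∃ h : v ∈ S, e (Quotient.mk st ⟨v, h⟩) = i}
      with hQ
    -- basic facts
    have hQS : ∀ i, ∀ v ∈ Q i, v ∈ S := fun i v hv => hv.1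
    have hQne : ∀ i, (Q i).Nonempty := by
      intro i
      obtain ⟨q, hq⟩ := Quotient.exists_rep (e.symm i)
      refine ⟨(q : V), q.2, ?_⟩
      have : Quotient.mk st ⟨(q : V), q.2⟩ = e.symm i := by
        rw [← hq]
      rw [this, Equiv.apply_symm_apply]
    have hsame : ∀ i, ∀ u ∈ Q i, ∀ v ∈ Q i, (u : V) = v ∨ G.Adj u v := by
      intro i u hu v hv
      obtain ⟨hu1, hu2⟩ := hu
      obtain ⟨hv1, hv2⟩ := hv
      have : Quotient.mk st ⟨u, hu1⟩ = Quotient.mk st ⟨v, hv1⟩ :=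
        e.injective (hu2.trans hv2.symm)
      exact Quotient.exact this
    have hclique : ∀ i, G.IsClique (Q i) := by
      intro i u hu v hv hne
      rcases hsame i u hu v hv with h | h
      · exact absurd h hne
      · exact h
    have hdiff : ∀ i j, ∀ u ∈ Q i, ∀ v ∈ Q j, ((u : V) = v ∨ G.Adj u v) → i = j := by
      intro i j u hu v hv h
      obtain ⟨hu1, hu2⟩ := hu
      obtain ⟨hv1, hv2⟩ := hv
      have : Quotient.mk st ⟨u, hu1⟩ = Quotient.mk st ⟨v, hv1⟩ := Quotient.sound h
      rw [← hu2, ← hv2, this]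
    have hdisj : ∀ i j, i ≠ j → Disjoint (Q i) (Q j) := by
      intro i j hij
      rw [Set.disjoint_left]
      intro v hvi hvj
      exact hij (hdiff i j v hvi v hvj (Or.inl rfl))
    have hcross : ∀ i j, i ≠ j → ∀ a ∈ Q i, ∀ b ∈ Q j, ¬ G.Adj a b := by
      intro i j hij a ha b hb hadj
      exact hij (hdiff i j a ha b hb (Or.inr hadj))
    have hneq : ∀ i j, i ≠ j → ∀ a ∈ Q i, ∀ b ∈ Q j, a ≠ b := by
      intro i j hij a ha b hb h
      exact hij (hdiff i j a ha b hb (Or.inl h))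
    have hpos : ∀ i j, i ≠ j → 1 ≤ setDist G (Q i) (Q j) := by
      intro i j hij
      obtain ⟨a, ha, b, hb, hab⟩ := setDist_exists G (hQne i) (hQne j)
      rw [← hab]
      exact hG.pos_dist_of_ne (hneq i j hij a ha b hb)
    refine ⟨ℓ, Q, hQne, hdisj, ?_, hclique, hcross, ?_, ?_⟩
    · ext v
      constructor
      · rintro ⟨_, ⟨i, rfl⟩, hv⟩
        exact hv.1
      · intro hv
        exact Set.mem_iUnion.2 ⟨e (Quotient.mk st ⟨v, hv⟩), hv, rfl⟩
    · -- condition (ii)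
      intro i j hij hpar
      by_contra hlt
      push_neg at hlt
      set m := setDist G (Q i) (Q j) with hm
      obtain ⟨a, ha, b, hb, hab⟩ := setDist_exists G (hQne i) (hQne j)
      simp only [Parallel, not_forall] at hpar
      obtain ⟨x, hx, y, hy, hxy⟩ := hpar
      have hxy' : m + 1 ≤ G.dist x y := by
        have := setDist_le G hx hy
        omega
      by_cases hcase : G.dist x b = m
      · -- triple (x, b, y)
        have hby : b ≠ y := by
          rintro rfl
          exact hxy hcase
        have hbyd : G.dist b y = 1 :=
          SimpleGraph.dist_eq_one_iff_adj.2 (hclique j hb hy hby)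
        have htri := hG.dist_triangle (u := x) (v := b) (w := y)
        have hxyd : G.dist x y = m + 1 := by omega
        have hxb : x ≠ b := hneq i j hij x hx b hb
        have hxyne : x ≠ y := hneq i j hij x hx y hy
        exact hS (hQS i x hx) (hQS j b hb) (hQS j y hy) hxb hxyne hby (by omega) (by omega)
      · -- triple (x, a, b)
        have hxb1 : m ≤ G.dist x b := setDist_le G hx hb
        have hxa : x ≠ a := by
          rintro rfl
          exact hcase hab
        have hxad : G.dist x a = 1 :=
          SimpleGraph.dist_eq_one_iff_adj.2 (hclique i hx ha hxa)
        have htri := hG.dist_triangle (u := x) (v := a) (w := b)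
        have hxbd : G.dist x b = m + 1 := by omega
        have hxb : x ≠ b := hneq i j hij x hx b hb
        have hab' : a ≠ b := hneq i j hij a ha b hb
        exact hS (hQS i x hx) (hQS i a ha) (hQS j b hb) hxa hxb hab' (by omega) (by omega)
    · -- condition (iii)
      intro i j k hij hik hjk hsum
      by_contra hlt
      push_neg at hlt
      obtain ⟨a, ha, b, hb, hab⟩ := setDist_exists G (hQne i) (hQne j)
      obtain ⟨b', hb', c, hc, hbc⟩ := setDist_exists G (hQne j) (hQne k)
      set mij := setDist G (Q i) (Q j) with hmij
      set mjk := setDist G (Q j) (Q k) with hmjk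
      set mik := setDist G (Q i) (Q k) with hmik
      have hjkpos : 1 ≤ mjk := hpos j k hjk
      have hab'le : G.dist a b' ≤ mij + 1 := by
        by_cases hbb' : b = b'
        · subst hbb'; omega
        · have hbb'd : G.dist b b' = 1 :=
            SimpleGraph.dist_eq_one_iff_adj.2 (hclique j hb hb' hbb')
          have htri := hG.dist_triangle (u := a) (v := b) (w := b')
          omega
      have hab'ge : mij ≤ G.dist a b' := setDist_le G ha hb'
      by_cases hcase : G.dist a b' = mij
      · -- triple (a, b', c)
        have htri := hG.dist_triangle (u := a) (v := b') (w := c)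
        have hacge : mik ≤ G.dist a c := setDist_le G ha hc
        have hac : G.dist a c = mik := by omega
        exact hS (hQS i a ha) (hQS j b' hb') (hQS k c hc)
          (hneq i j hij a ha b' hb') (hneq i k hik a ha c hc) (hneq j k hjk b' hb' c hc)
          (by omega) (by omega)
      · -- triple (a, b, b')
        have hbb' : b ≠ b' := by
          rintro rfl
          exact hcase hab
        have hbb'd : G.dist b b' = 1 :=
          SimpleGraph.dist_eq_one_iff_adj.2 (hclique j hb hb' hbb')
        have hab'd : G.dist a b' = mij + 1 := by omega
        exact hS (hQS i a ha) (hQS j b hb) (hQS j b' hb')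
          (hneq i j hij a ha b hb) (hneq i j hij a ha b' hb') hbb'
          (by omega) (by omega)
  · rintro ⟨ℓ, Q, hQne, hdisj, hunion, hclique, hcross, hii, hiii⟩
    intro u v w hu hv hw huv huw hvw hsum hle
    rw [← hunion] at hu hv hw
    obtain ⟨_, ⟨iu, rfl⟩, hu⟩ := hu
    obtain ⟨_, ⟨iv, rfl⟩, hv⟩ := hv
    obtain ⟨_, ⟨iw, rfl⟩, hw⟩ := hw
    have hneq : ∀ i j, i ≠ j → ∀ a ∈ Q i, ∀ b ∈ Q j, a ≠ b := by
      intro i j hij a ha b hb h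
      subst h
      exact Set.disjoint_left.1 (hdisj i j hij) ha hb
    have hdist1 : ∀ i, ∀ a ∈ Q i, ∀ b ∈ Q i, a ≠ b → G.dist a b = 1 := by
      intro i a ha b hb hab
      exact SimpleGraph.dist_eq_one_iff_adj.2 (hclique i ha hb hab)
    have hnpar : ∀ i j, i ≠ j → ∀ a ∈ Q i, ∀ b ∈ Q j,
        G.dist a b ≠ setDist G (Q i) (Q j) → d ≤ setDist G (Q i) (Q j) := by
      intro i j hij a ha b hb hne
      exact hii i j hij (fun hp => hne (hp a ha b hb))
    have hposd : ∀ i j, i ≠ j → ∀ a ∈ Q i, ∀ b ∈ Q j, 1 ≤ G.dist a b := by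
      intro i j hij a ha b hb
      exact hG.pos_dist_of_ne (hneq i j hij a ha b hb)
    by_cases huveq : iu = iv
    · subst huveq
      by_cases huweq : iu = iw
      · -- all in same clique
        subst huweq
        have h1 := hdist1 iu u hu v hv huv
        have h2 := hdist1 iu v hv w hw hvw
        have h3 := hdist1 iu u hu w hw huw
        omega
      · -- u,v in Q iu, w in Q iw
        have h1 := hdist1 iu u hu v hv huv
        have h2 : 1 + G.dist v w = G.dist u w := by omega
        have hnp : d ≤ setDist G (Q iu) (Q iw) := by
          by_cases hc : G.dist u w = setDist G (Q iu) (Q iw)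
          · refine hnpar iu iw huweq v hv w hw ?_
            have := setDist_le G hv hw
            omega
          · exact hnpar iu iw huweq u hu w hw hc
        have h3 := setDist_le G (A := Q iu) (B := Q iw) hv hw
        omega
    · by_cases hvweq : iv = iw
      · -- v,w in Q iv, u in Q iu
        subst hvweq
        have h1 := hdist1 iv v hv w hw hvw
        have hnp : d ≤ setDist G (Q iu) (Q iv) := by
          by_cases hc : G.dist u v = setDist G (Q iu) (Q iv)
          · refine hnpar iu iv huveq u hu w hw ?_
            have := setDist_le G hu hv
            omega
          · exact hnpar iu iv huveq u hu v hv hc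
        have h3 := setDist_le G (A := Q iu) (B := Q iv) hu hv
        omega
      · by_cases huweq : iu = iw
        · -- u,w in Q iu, v in Q iv
          subst huweq
          have h1 := hdist1 iu u hu w hw huw
          have h2 := hposd iu iv huveq u hu v hv
          have h3 := hposd iv iu (Ne.symm huveq) v hv w hw
          omega
        · -- all cliques distinct
          have huv' : G.dist u v = setDist G (Q iu) (Q iv) := by
            by_contra hc
            have h1 := hnpar iu iv huveq u hu v hv hc
            have h2 := setDist_le G (A := Q iu) (B := Q iv) hu hv
            have h3 := hposd iv iw hvweq v hv w hw
            omega
          have hvw' : G.dist v w = setDist G (Q iv) (Q iw) := by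
            by_contra hc
            have h1 := hnpar iv iw hvweq v hv w hw hc
            have h2 := setDist_le G (A := Q iv) (B := Q iw) hv hw
            have h3 := hposd iu iv huveq u hu v hv
            omega
          have huw' : G.dist u w = setDist G (Q iu) (Q iw) := by
            by_contra hc
            have h1 := hnpar iu iw huweq u hu w hw hc
            have h2 := setDist_le G (A := Q iu) (B := Q iw) hu hw
            omega
          have := hiii iu iv iw huveq huweq hvweq (by omega)
          omega
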